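/- With c_3 as in Proposition 4.2 and α, β as in Setup 2.7, c_3 vanishes on ∧²M_1 ∧ α_1(K_1); that is, c_3(θ_1 ∧ θ_1' ∧ α_1(φ_1)) = 0 for all θ_1, θ_1' ∈ M_1 and φ_1 ∈ K_1. -/
import Mathlib


/-- Proposition 4.3, last item: With
`c₃(θ∧θ'∧θ'') = β₂(θ∧θ')β₁(θ'') - β₂(θ∧θ'')β₁(θ') + β₂(θ'∧θ'')β₁(θ)`
and `α, β` as in Setup 2.7, `c₃` vanishes on `⋀²M₁ ∧ α₁(K₁)`:
`c₃(θ₁ ∧ θ₁' ∧ α₁(φ₁)) = 0` for all `θ₁, θ₁' ∈ M₁`, `φ₁ ∈ K₁`. -/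
theorem stmt13
    {R : Type*} [CommRing R]
    {K1 K2 K3 M1 M2 M3 M4 : Type*}
    [AddCommGroup K1] [AddCommGroup K2] [AddCommGroup K3]
    [AddCommGroup M1] [AddCommGroup M2] [AddCommGroup M3] [AddCommGroup M4]
    [Module R K1] [Module R K2] [Module R K3]
    [Module R M1] [Module R M2] [Module R M3] [Module R M4]
    -- differentials of the Koszul complex K (K₀ = R) and of M (M₀ = R)
    (k1 : K1 →ₗ[R] R) (k2 : K2 →ₗ[R] K1) (k3 : K3 →ₗ[R] K2)
    (m1 : M1 →ₗ[R] R) (m2 : M2 →ₗ[R] M1) (m3 : M3 →ₗ[R] M2) (m4 : M4 →ₗ[R] M3)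
    -- graded multiplications on K and on M
    (kmul11 : K1 →ₗ[R] K1 →ₗ[R] K2) (kmul12 : K1 →ₗ[R] K2 →ₗ[R] K3)
    (mmul11 : M1 →ₗ[R] M1 →ₗ[R] M2) (mmul12 : M1 →ₗ[R] M2 →ₗ[R] M3)
    (mmul13 : M1 →ₗ[R] M3 →ₗ[R] M4) (mmul22 : M2 →ₗ[R] M2 →ₗ[R] M4)
    -- orientations [-]_K and [-]_M
    (ωK : K3 ≃ₗ[R] R) (ωM : M4 ≃ₗ[R] R)
    -- the comparison morphism α : K → M (α₀ = id_R)
    (α1 : K1 →ₗ[R] M1) (α2 : K2 →ₗ[R] M2) (α3 : K3 →ₗ[R] M3)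
    -- the duality map β : M → K[-1]
    (β1 : M1 →ₗ[R] R) (β2 : M2 →ₗ[R] K1) (β3 : M3 →ₗ[R] K2) (β4 : M4 →ₗ[R] K3)
    -- β∘α = 0 and β(α(φ)·θ) = φ·β(θ) (Proposition 3.1), graded commutativity
    (hβα1 : ∀ φ : K1, β1 (α1 φ) = 0)
    (hβmix11 : ∀ (φ : K1) (θ : M1), β2 (mmul11 (α1 φ) θ) = β1 θ • φ)
    (hM11comm : ∀ x y : M1, mmul11 x y = - mmul11 y x) :
    ∀ (θ θ' : M1) (φ : K1),
      β1 (α1 φ) • β2 (mmul11 θ θ') - β1 θ' • β2 (mmul11 θ (α1 φ))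
        + β1 θ • β2 (mmul11 θ' (α1 φ)) = 0 := by
  intro θ θ' φ
  have h1 : β2 (mmul11 θ (α1 φ)) = -(β1 θ • φ) := by
    rw [hM11comm, map_neg, hβmix11]
  have h2 : β2 (mmul11 θ' (α1 φ)) = -(β1 θ' • φ) := by
    rw [hM11comm, map_neg, hβmix11]
  rw [hβα1, h1, h2, zero_smul, smul_neg, smul_neg, smul_comm]
  abel
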